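/- If (x1,x2) ∈ [−π,π]² is a critical point of β (∇β(x1,x2) = 0) and β(x1,x2) ≠ 0, then β(x1,x2) = 1 or β(x1,x2) = 9. -/

import Mathlib

open Real

noncomputable def hexβ (x1 x2 : ℝ) : ℝ :=
  3 + 2 * (Real.cos x1 + Real.cos x2 + Real.cos (x1 - x2))

theorem hexβ_critical_values (x1 x2 : ℝ)
    (h1 : x1 ∈ Set.Icc (-π) π) (h2 : x2 ∈ Set.Icc (-π) π)
    (hc1 : HasDerivAt (fun t => hexβ t x2) 0 x1)
    (hc2 : HasDerivAt (fun t => hexβ x1 t) 0 x2)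
    (hβ : hexβ x1 x2 ≠ 0) :
    hexβ x1 x2 = 1 ∨ hexβ x1 x2 = 9 := by
  have hA : HasDerivAt (fun t : ℝ => Real.cos (t - x2)) (-(Real.sin (x1 - x2))) x1 := by
    have := (Real.hasDerivAt_cos (x1 - x2)).comp x1 ((hasDerivAt_id x1).sub_const x2)
    simpa [Function.comp_def] using this
  have hB : HasDerivAt (fun t : ℝ => Real.cos (x1 - t)) (Real.sin (x1 - x2)) x2 := by
    have := (Real.hasDerivAt_cos (x1 - x2)).comp x2 ((hasDerivAt_const x2 x1).sub (hasDerivAt_id x2))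
    simpa [Function.comp_def] using this
  have d1 : HasDerivAt (fun t : ℝ => hexβ t x2)
      (2 * (-(Real.sin x1) + -(Real.sin (x1 - x2)))) x1 := by
    have := ((((Real.hasDerivAt_cos x1).add_const (Real.cos x2)).add hA).const_mul
      (2:ℝ)).const_add 3
    simpa [hexβ] using this
  have d2 : HasDerivAt (fun t : ℝ => hexβ x1 t)
      (2 * (-(Real.sin x2) + Real.sin (x1 - x2))) x2 := by
    have := ((((Real.hasDerivAt_cos x2).const_add (Real.cos x1)).add hB).const_mul
      (2:ℝ)).const_add 3
    simpa [hexβ] using this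
  have e1 : Real.sin x1 + Real.sin (x1 - x2) = 0 := by
    have := hc1.unique d1; linarith
  have e2 : Real.sin x2 - Real.sin (x1 - x2) = 0 := by
    have := hc2.unique d2; linarith
  set a := Real.cos x1 with ha
  set b := Real.cos x2 with hb
  set s1 := Real.sin x1 with hs1
  set s2 := Real.sin x2 with hs2
  have hcs : Real.cos (x1 - x2) = a * b + s1 * s2 := Real.cos_sub x1 x2
  have hss : Real.sin (x1 - x2) = s1 * b - a * s2 := Real.sin_sub x1 x2
  have p1 : s1 ^ 2 + a ^ 2 = 1 := Real.sin_sq_add_cos_sq x1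
  have p2 : s2 ^ 2 + b ^ 2 = 1 := Real.sin_sq_add_cos_sq x2
  clear_value a b s1 s2
  rw [hss] at e1 e2
  -- s1 = -s2 and s2*(1+a+b)=0
  have hs12 : s1 = -s2 := by linarith
  have key : s2 * (1 + a + b) = 0 := by linear_combination e2 + b * hs12
  have hβval : hexβ x1 x2 = 3 + 2 * (a + b + (a * b + s1 * s2)) := by
    rw [hexβ, hcs, ← ha, ← hb]
  rcases mul_eq_zero.1 key with hz | hab
  · -- s2 = 0, so s1 = 0, a,b = ±1
    have hs1z : s1 = 0 := by rw [hs12, hz, neg_zero]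
    have ha2 : a ^ 2 = 1 := by nlinarith
    have hb2 : b ^ 2 = 1 := by nlinarith
    have ha' : a = 1 ∨ a = -1 := by
      rcases mul_self_eq_one_iff.1 (by nlinarith : a * a = 1) with h | h
      · exact Or.inl h
      · exact Or.inr h
    have hb' : b = 1 ∨ b = -1 := by
      rcases mul_self_eq_one_iff.1 (by nlinarith : b * b = 1) with h | h
      · exact Or.inl h
      · exact Or.inr h
    rw [hβval, hs1z, hz]
    rcases ha' with h | h <;> rcases hb' with h' | h' <;> rw [h, h'] <;> norm_num
  · -- 1 + a + b = 0
    exfalso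
    have hs1s2 : s1 ^ 2 = s2 ^ 2 := by rw [hs12]; ring
    have hsq : a ^ 2 = b ^ 2 := by linarith
    have : (a - b) * (a + b) = 0 := by nlinarith
    rcases mul_eq_zero.1 this with h | h
    · -- a = b = -1/2
      have hav : a = -1/2 := by linarith
      have hbv : b = -1/2 := by linarith
      have hs2sq : s2 ^ 2 = 3/4 := by nlinarith
      apply hβ
      rw [hβval, hav, hbv, hs12]
      linear_combination (-2 : ℝ) * hs2sq
    · linarith
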